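/- Let (p_k^{(1)}) and (p_k^{(2)}) be critical offspring distributions, each with p_1 < 1, with pgfs Φ_1, Φ_2 and tree-size probabilities (q_n^{(1)}), (q_n^{(2)}). Then the following are equivalent: (a) for every integer m ≥ 1 and every real t > 0, ∑_{n≥1} q_n^{(1)} (n−1+t)^{−m} ≤ ∑_{n≥1} q_n^{(2)} (n−1+t)^{−m}; (b) Φ_1(s) ≤ Φ_2(s) for all s ∈ (0,1). Moreover, if (b) holds, then ∑_{n≥1} q_n^{(1)} (n−1+t)^{α} ≤ ∑_{n≥1} q_n^{(2)} (n−1+t)^{α} for every real α < 0 and every real t > 0. -/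

import Mathlib

open Real Set

private lemma summable_of_tsum_one {f : ℕ → ℝ} (h : ∑' n, f n = 1) : Summable f := by
  by_contra hs
  rw [tsum_eq_zero_of_not_summable hs] at h
  norm_num at h

private lemma exists_ge_two {p : ℕ → ℝ} (hp : ∀ k, 0 ≤ p k)
    (hcrit : ∑' k : ℕ, (k : ℝ) * p k = 1) (hp1 : p 1 < 1) :
    ∃ k, 2 ≤ k ∧ 0 < p k := by
  by_contra h
  push_neg at h
  have hz : ∀ k, 2 ≤ k → p k = 0 := fun k hk => le_antisymm (h k hk) (hp k)
  have heq : ∑' k : ℕ, (k : ℝ) * p k = ((1:ℕ) : ℝ) * p 1 := by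
    refine tsum_eq_single (f := fun k : ℕ => (k:ℝ) * p k) 1 ?_
    intro k hk
    rcases k with _ | _ | n
    · simp
    · exact absurd rfl hk
    · rw [hz (n+1+1) (by omega)]; ring
  rw [heq] at hcrit
  rw [Nat.cast_one, one_mul] at hcrit
  exact absurd hcrit hp1.ne

private lemma p_zero_pos {p : ℕ → ℝ} (hp : ∀ k, 0 ≤ p k) (hpsum : ∑' k, p k = 1)
    (hcrit : ∑' k : ℕ, (k : ℝ) * p k = 1) (hp1 : p 1 < 1) : 0 < p 0 := by
  rcases lt_or_eq_of_le (hp 0) with h | h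
  · exact h
  obtain ⟨k₀, hk₀2, hk₀p⟩ := exists_ge_two hp hcrit hp1
  have hsummable : Summable (fun k : ℕ => ((k : ℝ) - 1) * p k) := by
    simpa only [sub_mul, one_mul] using
      (summable_of_tsum_one hcrit).sub (summable_of_tsum_one hpsum)
  have hsum0 : ∑' k : ℕ, ((k : ℝ) - 1) * p k = 0 := by
    have h2 := Summable.tsum_sub (summable_of_tsum_one hcrit) (summable_of_tsum_one hpsum)
    simp only [sub_mul, one_mul] at h2 ⊢
    rw [h2, hcrit, hpsum, sub_self]
  have hnn : ∀ j : ℕ, j ≠ k₀ → 0 ≤ ((j : ℝ) - 1) * p j := by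
    intro j _
    rcases j with _ | n
    · rw [← h]; simp
    · apply mul_nonneg _ (hp _)
      have h1 : (1:ℝ) ≤ ((n+1 : ℕ) : ℝ) := by exact_mod_cast Nat.succ_le_succ (Nat.zero_le n)
      linarith
  have hle := Summable.le_tsum hsummable k₀ hnn
  rw [hsum0] at hle
  have hpos : 0 < ((k₀ : ℝ) - 1) * p k₀ := by
    apply mul_pos _ hk₀p
    have : (2:ℝ) ≤ (k₀ : ℝ) := by exact_mod_cast hk₀2
    linarith
  linarith

private lemma summable_pow {p : ℕ → ℝ} (hp : ∀ k, 0 ≤ p k) (hpsum : ∑' k, p k = 1)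
    {s : ℝ} (hs0 : 0 ≤ s) (hs1 : s ≤ 1) : Summable (fun k : ℕ => p k * s ^ k) := by
  refine Summable.of_nonneg_of_le (fun k => mul_nonneg (hp k) (pow_nonneg hs0 k))
    (fun k => ?_) (summable_of_tsum_one hpsum)
  calc p k * s ^ k ≤ p k * 1 := by
        exact mul_le_mul_of_nonneg_left (pow_le_one₀ hs0 hs1) (hp k)
    _ = p k := mul_one _

private lemma pow_sub_pow_le {a b : ℝ} (ha : 0 ≤ a) (hab : a ≤ b) (hb : b ≤ 1) :
    ∀ n : ℕ, b ^ n - a ^ n ≤ n * (b - a) := by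
  intro n
  induction n with
  | zero => simp
  | succ n ih =>
    have h1 : 0 ≤ b ^ n - a ^ n := by
      have := pow_le_pow_left₀ ha hab n
      linarith
    have h2 : a ^ n ≤ 1 := pow_le_one₀ ha (hab.trans hb)
    have h3 : b ^ (n+1) - a ^ (n+1) = b * (b ^ n - a ^ n) + (b - a) * a ^ n := by ring
    push_cast
    nlinarith [pow_nonneg ha n]

private lemma bernoulli_nat {s : ℝ} (hs0 : 0 < s) (hs1 : s < 1) {k : ℕ} (hk : 2 ≤ k) :
    1 + (k : ℝ) * (s - 1) < s ^ k := by
  have h := one_add_mul_self_lt_rpow_one_add (s := s - 1) (by linarith) (by intro h; linarith [sub_eq_zero.mp h])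
    (p := (k : ℝ)) (by exact_mod_cast Nat.lt_of_lt_of_le one_lt_two hk)
  rw [add_sub_cancel, rpow_natCast] at h
  exact h

/-- Φ(s) > s on (0,1) for critical distributions with p 1 < 1. -/
private lemma phi_gt {p : ℕ → ℝ} (hp : ∀ k, 0 ≤ p k) (hpsum : ∑' k, p k = 1)
    (hcrit : ∑' k : ℕ, (k : ℝ) * p k = 1) (hp1 : p 1 < 1)
    {s : ℝ} (hs0 : 0 < s) (hs1 : s < 1) : s < ∑' k, p k * s ^ k := by
  obtain ⟨k₀, hk₀2, hk₀p⟩ := exists_ge_two hp hcrit hp1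
  set f : ℕ → ℝ := fun k => p k + (s - 1) * ((k : ℝ) * p k) with hf
  have hfg : ∀ k, f k ≤ p k * s ^ k := by
    intro k
    have hb : 1 + (k:ℝ) * (s - 1) ≤ s ^ k := by
      have := one_add_mul_le_pow (a := s - 1) (by linarith) k
      rwa [add_sub_cancel] at this
    have := mul_le_mul_of_nonneg_left hb (hp k)
    simp only [hf]; nlinarith
  have hfsum : Summable f :=
    (summable_of_tsum_one hpsum).add ((summable_of_tsum_one hcrit).mul_left (s - 1))
  have hgsum := summable_pow hp hpsum hs0.le hs1.le
  have hstrict : f k₀ < p k₀ * s ^ k₀ := by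
    have hb := bernoulli_nat hs0 hs1 hk₀2
    have := mul_lt_mul_of_pos_left hb hk₀p
    simp only [hf]; nlinarith
  have h := Summable.tsum_lt_tsum hfg hstrict hfsum hgsum
  have hft : ∑' k, f k = s := by
    rw [hf, Summable.tsum_add (summable_of_tsum_one hpsum) ((summable_of_tsum_one hcrit).mul_left (s-1)),
      tsum_mul_left, hpsum, hcrit]
    ring
  rwa [hft] at h

/-- strict monotonicity of s ↦ s / Φ(s) : a Φ(b) < b Φ(a) for 0 ≤ a < b < 1. -/
private lemma gfun_mono {p : ℕ → ℝ} (hp : ∀ k, 0 ≤ p k) (hpsum : ∑' k, p k = 1)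
    (hcrit : ∑' k : ℕ, (k : ℝ) * p k = 1) (hp1 : p 1 < 1)
    {a b : ℝ} (ha : 0 ≤ a) (hab : a < b) (hb : b < 1) :
    a * ∑' k, p k * b ^ k < b * ∑' k, p k * a ^ k := by
  have hp0 := p_zero_pos hp hpsum hcrit hp1
  have ha1 : a < 1 := hab.trans hb
  have hab1 : a * b < 1 := by nlinarith
  set f : ℕ → ℝ := fun k => (b - a) * (a * b) * (p k - (k : ℝ) * p k) with hf
  set g : ℕ → ℝ := fun k => b * (p k * a ^ k) - a * (p k * b ^ k) with hg
  have hfg : ∀ k, f k ≤ g k := by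
    intro k
    simp only [hf, hg]
    rcases k with _ | _ | n
    · simp only [Nat.cast_zero, pow_zero]
      nlinarith [mul_nonneg (mul_nonneg (sub_nonneg.2 hab.le) (hp 0)) (sub_nonneg.2 hab1.le)]
    · exact le_of_eq (by push_cast; ring)
    · have hps := pow_sub_pow_le ha hab.le hb.le (n + 1)
      have hpk := hp (n + 2)
      have habnn : 0 ≤ a * b := mul_nonneg ha (ha.trans_lt hab).le
      have key := mul_le_mul_of_nonneg_left hps (mul_nonneg habnn hpk)
      rw [pow_succ a (n+1), pow_succ b (n+1)]
      push_cast
      push_cast at key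
      nlinarith [key]
  have hfsum : Summable f :=
    (((summable_of_tsum_one hpsum).sub (summable_of_tsum_one hcrit)).mul_left ((b - a) * (a * b)))
  have hgsum : Summable g := by
    exact ((summable_pow hp hpsum ha ha1.le).mul_left b).sub
      ((summable_pow hp hpsum (ha.trans hab.le) hb.le).mul_left a)
  have hstrict : f 0 < g 0 := by
    simp only [hf, hg, Nat.cast_zero, pow_zero]
    nlinarith [mul_pos (mul_pos (sub_pos.2 hab) hp0) (sub_pos.2 hab1)]
  have h := Summable.tsum_lt_tsum hfg hstrict hfsum hgsum
  have hft : ∑' k, f k = 0 := by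
    simp only [hf]
    rw [tsum_mul_left, Summable.tsum_sub (summable_of_tsum_one hpsum) (summable_of_tsum_one hcrit),
      hpsum, hcrit]
    ring
  have hgt : ∑' k, g k = b * (∑' k, p k * a ^ k) - a * (∑' k, p k * b ^ k) := by
    simp only [hg]
    rw [Summable.tsum_sub (((summable_pow hp hpsum ha ha1.le)).mul_left b)
      ((summable_pow hp hpsum (ha.trans hab.le) hb.le).mul_left a),
      tsum_mul_left, tsum_mul_left]
  rw [hft, hgt] at h
  linarith

private lemma phi_pos {p : ℕ → ℝ} (hp : ∀ k, 0 ≤ p k) (hpsum : ∑' k, p k = 1)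
    (hcrit : ∑' k : ℕ, (k : ℝ) * p k = 1) (hp1 : p 1 < 1)
    {s : ℝ} (hs0 : 0 ≤ s) (hs1 : s ≤ 1) : 0 < ∑' k, p k * s ^ k := by
  refine Summable.tsum_pos (summable_pow hp hpsum hs0 hs1)
    (fun k => mul_nonneg (hp k) (pow_nonneg hs0 k)) 0 ?_
  simpa using p_zero_pos hp hpsum hcrit hp1

private lemma Y_pos {q : ℕ → ℝ} (hqnn : ∀ n, 0 ≤ q n) (hqsum : ∑' n, q n = 1)
    {z : ℝ} (hz0 : 0 < z) (hz1 : z ≤ 1) : 0 < ∑' n, q n * z ^ n := by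
  obtain ⟨n, hn⟩ : ∃ n, 0 < q n := by
    by_contra h
    push_neg at h
    have : ∀ n, q n = 0 := fun n => le_antisymm (h n) (hqnn n)
    rw [tsum_congr this, tsum_zero] at hqsum
    norm_num at hqsum
  exact Summable.tsum_pos (summable_pow hqnn hqsum hz0.le hz1)
    (fun k => mul_nonneg (hqnn k) (pow_nonneg hz0.le k)) n
    (mul_pos hn (pow_pos hz0 n))

private lemma Y_le {q : ℕ → ℝ} (hq0 : q 0 = 0) (hqnn : ∀ n, 0 ≤ q n)
    (hqsum : ∑' n, q n = 1) {z : ℝ} (hz0 : 0 ≤ z) (hz1 : z ≤ 1) :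
    ∑' n, q n * z ^ n ≤ z := by
  have h := Summable.tsum_le_tsum (f := fun n => q n * z ^ n) (g := fun n => q n * z)
    (fun n => ?_) (summable_pow hqnn hqsum hz0 hz1)
    ((summable_of_tsum_one hqsum).mul_right z)
  · rwa [tsum_mul_right, hqsum, one_mul] at h
  · rcases n with _ | m
    · simp [hq0]
    · refine mul_le_mul_of_nonneg_left ?_ (hqnn _)
      calc z ^ (m+1) ≤ z ^ 1 := pow_le_pow_of_le_one hz0 hz1 (by omega)
        _ = z := pow_one z

/-- If Φ₁ ≤ Φ₂ on (0,1) then Y₁ ≤ Y₂ on (0,1). -/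
private lemma Y_mono {p₁ p₂ q₁ q₂ : ℕ → ℝ}
    (hp₂ : ∀ k, 0 ≤ p₂ k) (hpsum₂ : ∑' k, p₂ k = 1)
    (hcrit₂ : ∑' k : ℕ, (k : ℝ) * p₂ k = 1) (hp₂1 : p₂ 1 < 1)
    (hq₁0 : q₁ 0 = 0) (hq₂0 : q₂ 0 = 0)
    (hq₁nn : ∀ n, 0 ≤ q₁ n) (hq₂nn : ∀ n, 0 ≤ q₂ n)
    (hq₁sum : ∑' n, q₁ n = 1) (hq₂sum : ∑' n, q₂ n = 1)
    (hPhi : ∀ s ∈ Set.Ioo (0:ℝ) 1, (∑' k, p₁ k * s ^ k) ≤ ∑' k, p₂ k * s ^ k)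
    {z : ℝ} (hz : z ∈ Set.Ioo (0:ℝ) 1)
    (hfa : (∑' n, q₁ n * z ^ n) = z * ∑' k, p₁ k * (∑' n, q₁ n * z ^ n) ^ k)
    (hfb : (∑' n, q₂ n * z ^ n) = z * ∑' k, p₂ k * (∑' n, q₂ n * z ^ n) ^ k) :
    (∑' n, q₁ n * z ^ n) ≤ ∑' n, q₂ n * z ^ n := by
  obtain ⟨hz0, hz1⟩ := hz
  set a := ∑' n, q₁ n * z ^ n with ha
  set b := ∑' n, q₂ n * z ^ n with hb
  have ha0 : 0 < a := Y_pos hq₁nn hq₁sum hz0 hz1.le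
  have ha1 : a < 1 := lt_of_le_of_lt (Y_le hq₁0 hq₁nn hq₁sum hz0.le hz1.le) hz1
  have hb0 : 0 < b := Y_pos hq₂nn hq₂sum hz0 hz1.le
  by_contra hcon
  push_neg at hcon   -- b < a
  have hA := gfun_mono hp₂ hpsum₂ hcrit₂ hp₂1 hb0.le hcon ha1
  have hle := hPhi a ⟨ha0, ha1⟩
  nlinarith [mul_le_mul_of_nonneg_left hle (mul_nonneg hz0.le hb0.le),
    mul_lt_mul_of_pos_left hA hz0]

/-- If Y₁ ≤ Y₂ on (0,1), then Φ₁ ≤ Φ₂ on (0,1). -/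
private lemma phi_le_of_Y_le {p₁ p₂ q₁ q₂ : ℕ → ℝ}
    (hp₁ : ∀ k, 0 ≤ p₁ k) (hpsum₁ : ∑' k, p₁ k = 1)
    (hcrit₁ : ∑' k : ℕ, (k : ℝ) * p₁ k = 1) (hp₁1 : p₁ 1 < 1)
    (hp₂ : ∀ k, 0 ≤ p₂ k) (hpsum₂ : ∑' k, p₂ k = 1)
    (hcrit₂ : ∑' k : ℕ, (k : ℝ) * p₂ k = 1) (hp₂1 : p₂ 1 < 1)
    (hq₁0 : q₁ 0 = 0) (hq₂0 : q₂ 0 = 0)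
    (hq₁nn : ∀ n, 0 ≤ q₁ n) (hq₂nn : ∀ n, 0 ≤ q₂ n)
    (hq₁sum : ∑' n, q₁ n = 1) (hq₂sum : ∑' n, q₂ n = 1)
    (hfix₁ : ∀ z ∈ Set.Icc (0:ℝ) 1,
      (∑' n, q₁ n * z ^ n) = z * ∑' k, p₁ k * (∑' n, q₁ n * z ^ n) ^ k)
    (hfix₂ : ∀ z ∈ Set.Icc (0:ℝ) 1,
      (∑' n, q₂ n * z ^ n) = z * ∑' k, p₂ k * (∑' n, q₂ n * z ^ n) ^ k)
    (hY : ∀ z ∈ Set.Ioo (0:ℝ) 1, (∑' n, q₁ n * z ^ n) ≤ ∑' n, q₂ n * z ^ n) :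
    ∀ s ∈ Set.Ioo (0:ℝ) 1, (∑' k, p₁ k * s ^ k) ≤ ∑' k, p₂ k * s ^ k := by
  rintro σ ⟨hσ0, hσ1⟩
  have hΦ2pos : 0 < ∑' k, p₂ k * σ ^ k := phi_pos hp₂ hpsum₂ hcrit₂ hp₂1 hσ0.le hσ1.le
  have hΦ2gt : σ < ∑' k, p₂ k * σ ^ k := phi_gt hp₂ hpsum₂ hcrit₂ hp₂1 hσ0 hσ1
  set z := σ / (∑' k, p₂ k * σ ^ k) with hzdef
  have hz0 : 0 < z := div_pos hσ0 hΦ2pos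
  have hz1 : z < 1 := (div_lt_one hΦ2pos).2 hΦ2gt
  have hσfix : σ = z * ∑' k, p₂ k * σ ^ k := by
    rw [hzdef, div_mul_cancel₀ _ hΦ2pos.ne']
  set b := ∑' n, q₂ n * z ^ n with hbdef
  have hb0 : 0 < b := Y_pos hq₂nn hq₂sum hz0 hz1.le
  have hb1 : b < 1 := lt_of_le_of_lt (Y_le hq₂0 hq₂nn hq₂sum hz0.le hz1.le) hz1
  have hbfix : b = z * ∑' k, p₂ k * b ^ k := hfix₂ z ⟨hz0.le, hz1.le⟩
  -- b = σ
  have hbσ : b = σ := by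
    rcases lt_trichotomy b σ with h | h | h
    · exfalso
      have hA := gfun_mono hp₂ hpsum₂ hcrit₂ hp₂1 hb0.le h hσ1
      nlinarith [mul_lt_mul_of_pos_left hA hz0]
    · exact h
    · exfalso
      have hA := gfun_mono hp₂ hpsum₂ hcrit₂ hp₂1 hσ0.le h hb1
      nlinarith [mul_lt_mul_of_pos_left hA hz0]
  set a := ∑' n, q₁ n * z ^ n with hadef
  have ha0 : 0 < a := Y_pos hq₁nn hq₁sum hz0 hz1.le
  have hafix : a = z * ∑' k, p₁ k * a ^ k := hfix₁ z ⟨hz0.le, hz1.le⟩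
  have haσ : a ≤ σ := hbσ ▸ hY z ⟨hz0, hz1⟩
  by_contra hcon
  push_neg at hcon   -- Φ₂ σ < Φ₁ σ
  have hσlt : σ < z * ∑' k, p₁ k * σ ^ k :=
    lt_of_eq_of_lt hσfix (mul_lt_mul_of_pos_left hcon hz0)
  rcases eq_or_lt_of_le haσ with h | h
  · rw [← h] at hσlt
    rw [← hafix] at hσlt
    exact lt_irrefl _ hσlt
  · have hA := gfun_mono hp₁ hpsum₁ hcrit₁ hp₁1 ha0.le h hσ1
    nlinarith [mul_lt_mul_of_pos_left hA hz0, mul_lt_mul_of_pos_left hσlt ha0]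

private lemma tendsto_aux {c : ℝ} (hc : 0 ≤ c) :
    Filter.Tendsto (fun m : ℕ => (1 + c / m) ^ (-(m : ℝ))) Filter.atTop (nhds (Real.exp (-c))) := by
  have h1 := Real.tendsto_one_add_div_pow_exp c
  have h2 : Filter.Tendsto (fun m : ℕ => ((1 + c / m) ^ m)⁻¹) Filter.atTop
      (nhds (Real.exp c)⁻¹) := h1.inv₀ (Real.exp_ne_zero c)
  rw [← Real.exp_neg] at h2
  refine h2.congr' ?_
  filter_upwards [Filter.eventually_ge_atTop 1] with m hm
  have hb : (0:ℝ) < 1 + c / m := by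
    have : (0:ℝ) ≤ c / m := div_nonneg hc (Nat.cast_nonneg m)
    linarith
  rw [Real.rpow_neg hb.le, Real.rpow_natCast]

/-- moment inequalities imply Y₁ ≤ Y₂ on (0,1). -/
private lemma Y_le_of_moments {q₁ q₂ : ℕ → ℝ}
    (hq₁0 : q₁ 0 = 0) (hq₂0 : q₂ 0 = 0)
    (hq₁nn : ∀ n, 0 ≤ q₁ n) (hq₂nn : ∀ n, 0 ≤ q₂ n)
    (hq₁sum : ∑' n, q₁ n = 1) (hq₂sum : ∑' n, q₂ n = 1)
    (hmom : ∀ m : ℕ, 1 ≤ m → ∀ t : ℝ, 0 < t →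
        (∑' n : ℕ, q₁ n * ((n : ℝ) - 1 + t) ^ (-(m : ℝ))) ≤
          ∑' n : ℕ, q₂ n * ((n : ℝ) - 1 + t) ^ (-(m : ℝ)))
    {z : ℝ} (hz : z ∈ Set.Ioo (0:ℝ) 1) :
    (∑' n, q₁ n * z ^ n) ≤ ∑' n, q₂ n * z ^ n := by
  obtain ⟨hz0, hz1⟩ := hz
  set s : ℝ := -Real.log z with hsdef
  have hs : 0 < s := by
    have := Real.log_neg hz0 hz1
    simp only [hsdef]; linarith
  have hzexp : Real.exp (-s) = z := by
    rw [hsdef, neg_neg, Real.exp_log hz0]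
  -- the rescaled terms
  set G : (ℕ → ℝ) → ℕ → ℕ → ℝ :=
    fun q m n => q n * (1 + ((n : ℝ) - 1) * s / m) ^ (-(m : ℝ)) with hG
  -- Step 1: identity with the moment terms
  have hident : ∀ (q : ℕ → ℝ), q 0 = 0 → ∀ m : ℕ, 1 ≤ m →
      ∀ n : ℕ, G q m n = (q n * ((n : ℝ) - 1 + (m : ℝ) / s) ^ (-(m : ℝ))) *
        ((m : ℝ) / s) ^ (m : ℝ) := by
    intro q hq0 m hm n
    have hm0 : (0:ℝ) < (m : ℝ) := by exact_mod_cast hm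
    rcases n with _ | n
    · simp [hG, hq0]
    · have hn1 : (1:ℝ) ≤ ((n+1 : ℕ) : ℝ) := by exact_mod_cast Nat.succ_le_succ (Nat.zero_le n)
      have hc : (0:ℝ) < ((n+1 : ℕ) : ℝ) - 1 + (m : ℝ) / s := by
        have : (0:ℝ) < (m : ℝ) / s := div_pos hm0 hs
        linarith
      have hsm : (0:ℝ) < s / m := div_pos hs hm0
      have hfact : 1 + (((n+1 : ℕ) : ℝ) - 1) * s / m
          = (((n+1 : ℕ) : ℝ) - 1 + (m : ℝ) / s) * (s / m) := by
        field_simp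
        ring
      simp only [hG]
      rw [hfact, Real.mul_rpow hc.le hsm.le]
      have hinv : (s / (m:ℝ)) ^ (-(m : ℝ)) = ((m : ℝ) / s) ^ (m : ℝ) := by
        rw [Real.rpow_neg hsm.le, ← Real.inv_rpow hsm.le, inv_div]
      rw [hinv]
      ring
  -- Step 2: dominated convergence
  have key : ∀ (q : ℕ → ℝ), q 0 = 0 → (∀ n, 0 ≤ q n) → (∑' n, q n = 1) →
      Filter.Tendsto (fun m : ℕ => ∑' n, G q m n) Filter.atTop
        (nhds (Real.exp s * ∑' n, q n * z ^ n)) := by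
    intro q hq0 hq hqsum
    have hlimit : (∑' n : ℕ, q n * Real.exp (-(((n : ℝ) - 1) * s)))
        = Real.exp s * ∑' n, q n * z ^ n := by
      rw [← tsum_mul_left]
      refine tsum_congr fun n => ?_
      have h1 : -(((n : ℝ) - 1) * s) = s + (n : ℝ) * (-s) := by ring
      rw [h1, Real.exp_add, Real.exp_nat_mul, hzexp]
      ring
    rw [← hlimit]
    refine tendsto_tsum_of_dominated_convergence (summable_of_tsum_one hqsum) ?_ ?_
    · intro n
      rcases n with _ | n
      · simp only [hG, hq0, zero_mul]
        simpa [hq0] using tendsto_const_nhds (α := ℝ) (f := Filter.atTop (α := ℕ))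
      · have hc : (0:ℝ) ≤ (((n+1 : ℕ) : ℝ) - 1) * s := by
          have : (1:ℝ) ≤ ((n+1 : ℕ) : ℝ) := by exact_mod_cast Nat.succ_le_succ (Nat.zero_le n)
          nlinarith
        have := (tendsto_aux hc).const_mul (q (n+1))
        simp only [hG]
        simpa [mul_div_assoc] using this
    · filter_upwards [Filter.eventually_ge_atTop 1] with m hm
      intro n
      rcases n with _ | n
      · simp [hG, hq0]
      · have hm0 : (0:ℝ) < (m:ℝ) := by exact_mod_cast hm
        have hn1 : (1:ℝ) ≤ ((n+1 : ℕ) : ℝ) := by exact_mod_cast Nat.succ_le_succ (Nat.zero_le n)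
        have hbase : (1:ℝ) ≤ 1 + (((n+1 : ℕ) : ℝ) - 1) * s / m := by
          have h1 : (0:ℝ) ≤ (((n+1 : ℕ) : ℝ) - 1) * s / m :=
            div_nonneg (mul_nonneg (by linarith) hs.le) hm0.le
          linarith
        have hx1 : (1 + (((n+1 : ℕ) : ℝ) - 1) * s / m) ^ (-(m : ℝ)) ≤ 1 :=
          Real.rpow_le_one_of_one_le_of_nonpos hbase (neg_nonpos.2 hm0.le)
        have hx0 : (0:ℝ) ≤ (1 + (((n+1 : ℕ) : ℝ) - 1) * s / m) ^ (-(m : ℝ)) :=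
          Real.rpow_nonneg (by linarith) _
        simp only [hG, Real.norm_eq_abs]
        rw [abs_of_nonneg (mul_nonneg (hq _) hx0)]
        calc q (n+1) * (1 + (((n+1 : ℕ) : ℝ) - 1) * s / m) ^ (-(m : ℝ))
            ≤ q (n+1) * 1 := mul_le_mul_of_nonneg_left hx1 (hq _)
          _ = q (n+1) := mul_one _
  -- Step 3: eventual inequality between the sums
  have hmono : ∀ᶠ m : ℕ in Filter.atTop, (∑' n, G q₁ m n) ≤ ∑' n, G q₂ m n := by
    filter_upwards [Filter.eventually_ge_atTop 1] with m hm
    have hm0 : (0:ℝ) < (m:ℝ) := by exact_mod_cast hm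
    have ht : (0:ℝ) < (m : ℝ) / s := div_pos hm0 hs
    have h1 : (∑' n, G q₁ m n)
        = (∑' n : ℕ, q₁ n * ((n : ℝ) - 1 + (m : ℝ) / s) ^ (-(m : ℝ))) * ((m : ℝ) / s) ^ (m : ℝ) := by
      rw [← tsum_mul_right]
      exact tsum_congr (hident q₁ hq₁0 m hm)
    have h2 : (∑' n, G q₂ m n)
        = (∑' n : ℕ, q₂ n * ((n : ℝ) - 1 + (m : ℝ) / s) ^ (-(m : ℝ))) * ((m : ℝ) / s) ^ (m : ℝ) := by
      rw [← tsum_mul_right]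
      exact tsum_congr (hident q₂ hq₂0 m hm)
    rw [h1, h2]
    exact mul_le_mul_of_nonneg_right (hmom m hm ((m:ℝ)/s) ht) (Real.rpow_nonneg ht.le _)
  have hfin := le_of_tendsto_of_tendsto
    (key q₁ hq₁0 hq₁nn hq₁sum) (key q₂ hq₂0 hq₂nn hq₂sum) hmono
  have hexp : (0:ℝ) < Real.exp s := Real.exp_pos s
  exact le_of_mul_le_mul_left hfin hexp

private lemma summable_moment {q : ℕ → ℝ} (hq0 : q 0 = 0) (hqnn : ∀ n, 0 ≤ q n)
    (hqsum : ∑' n, q n = 1) {α : ℝ} (hα : α < 0) {t : ℝ} (ht : 0 < t) :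
    Summable (fun n : ℕ => q n * ((n : ℝ) - 1 + t) ^ α) := by
  refine Summable.of_nonneg_of_le (fun n => ?_) (fun n => ?_)
    ((summable_of_tsum_one hqsum).mul_right (t ^ α))
  · rcases n with _ | n
    · simp [hq0]
    · have hc : (0:ℝ) < ((n+1 : ℕ) : ℝ) - 1 + t := by
        have : (1:ℝ) ≤ ((n+1 : ℕ) : ℝ) := by exact_mod_cast Nat.succ_le_succ (Nat.zero_le n)
        linarith
      exact mul_nonneg (hqnn _) (Real.rpow_nonneg hc.le _)
  · rcases n with _ | n
    · simp [hq0, Real.rpow_nonneg ht.le]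
    · have h1 : (1:ℝ) ≤ ((n+1 : ℕ) : ℝ) := by exact_mod_cast Nat.succ_le_succ (Nat.zero_le n)
      have hle : t ≤ ((n+1 : ℕ) : ℝ) - 1 + t := by linarith
      exact mul_le_mul_of_nonneg_left
        (Real.rpow_le_rpow_of_nonpos ht hle hα.le) (hqnn _)

private lemma moment_repr {q : ℕ → ℝ} (hq0 : q 0 = 0) (hqnn : ∀ n, 0 ≤ q n)
    {α : ℝ} (hα : α < 0) {t : ℝ} (ht : 0 < t) (n : ℕ) :
    ENNReal.ofReal (q n * ((n : ℝ) - 1 + t) ^ α) * ENNReal.ofReal (Real.Gamma (-α))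
      = ∫⁻ x in Set.Ioi (0:ℝ),
          ENNReal.ofReal (q n * (x ^ (-α - 1) * Real.exp (-(((n : ℝ) - 1 + t) * x)))) := by
  have hβ : (0:ℝ) < -α := by linarith
  rcases n with _ | n
  · simp [hq0]
  set c : ℝ := ((n+1 : ℕ) : ℝ) - 1 + t with hc
  have hc0 : 0 < c := by
    have : (1:ℝ) ≤ ((n+1 : ℕ) : ℝ) := by exact_mod_cast Nat.succ_le_succ (Nat.zero_le n)
    simp only [hc]; linarith
  have hint : MeasureTheory.IntegrableOn
      (fun x : ℝ => x ^ (-α - 1) * Real.exp (-(c * x))) (Set.Ioi 0) := by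
    have := integrableOn_rpow_mul_exp_neg_mul_rpow (s := -α - 1) (p := 1) (b := c)
      (by linarith) zero_lt_one hc0
    refine this.congr_fun (fun x hx => ?_) measurableSet_Ioi
    beta_reduce
    rw [Real.rpow_one, neg_mul]
  have hintq : MeasureTheory.Integrable
      (fun x : ℝ => q (n+1) * (x ^ (-α - 1) * Real.exp (-(c * x))))
      (MeasureTheory.volume.restrict (Set.Ioi 0)) := hint.const_mul _
  have hnn : 0 ≤ᵐ[MeasureTheory.volume.restrict (Set.Ioi 0)]
      (fun x : ℝ => q (n+1) * (x ^ (-α - 1) * Real.exp (-(c * x)))) := by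
    refine Filter.eventually_of_mem
      (MeasureTheory.self_mem_ae_restrict measurableSet_Ioi) (fun x hx => ?_)
    exact mul_nonneg (hqnn _)
      (mul_nonneg (Real.rpow_nonneg (le_of_lt hx) _) (Real.exp_nonneg _))
  rw [← MeasureTheory.ofReal_integral_eq_lintegral_ofReal hintq hnn]
  rw [MeasureTheory.integral_const_mul]
  have hval : ∫ x in Set.Ioi (0:ℝ), x ^ (-α - 1) * Real.exp (-(c * x))
      = (1 / c) ^ (-α) * Real.Gamma (-α) := by
    have := Real.integral_rpow_mul_exp_neg_mul_Ioi hβ hc0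
    convert this using 3 <;> ring_nf
  rw [hval]
  rw [← ENNReal.ofReal_mul (mul_nonneg (hqnn _) (Real.rpow_nonneg hc0.le _))]
  congr 1
  have hcα : c ^ α = (1 / c) ^ (-α) := by
    rw [one_div, Real.inv_rpow hc0.le, ← Real.rpow_neg hc0.le, neg_neg]
  rw [hcα]; ring

private lemma moment_term_nonneg {q : ℕ → ℝ} (hq0 : q 0 = 0) (hqnn : ∀ n, 0 ≤ q n)
    {α t : ℝ} (ht : 0 < t) (n : ℕ) : 0 ≤ q n * ((n : ℝ) - 1 + t) ^ α := by
  rcases n with _ | n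
  · simp [hq0]
  · have hc : (0:ℝ) < ((n+1 : ℕ) : ℝ) - 1 + t := by
      have : (1:ℝ) ≤ ((n+1 : ℕ) : ℝ) := by exact_mod_cast Nat.succ_le_succ (Nat.zero_le n)
      linarith
    exact mul_nonneg (hqnn _) (Real.rpow_nonneg hc.le _)

private lemma moment_le_of_Y_le {q₁ q₂ : ℕ → ℝ}
    (hq₁0 : q₁ 0 = 0) (hq₂0 : q₂ 0 = 0)
    (hq₁nn : ∀ n, 0 ≤ q₁ n) (hq₂nn : ∀ n, 0 ≤ q₂ n)
    (hq₁sum : ∑' n, q₁ n = 1) (hq₂sum : ∑' n, q₂ n = 1)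
    (hY : ∀ z ∈ Set.Ioo (0:ℝ) 1, (∑' n, q₁ n * z ^ n) ≤ ∑' n, q₂ n * z ^ n)
    {α : ℝ} (hα : α < 0) {t : ℝ} (ht : 0 < t) :
    (∑' n : ℕ, q₁ n * ((n : ℝ) - 1 + t) ^ α) ≤ ∑' n : ℕ, q₂ n * ((n : ℝ) - 1 + t) ^ α := by
  have hβ : (0:ℝ) < -α := by linarith
  have hΓpos : 0 < Real.Gamma (-α) := Real.Gamma_pos_of_pos hβ
  -- the common chain computation
  have chain : ∀ q : ℕ → ℝ, q 0 = 0 → (∀ n, 0 ≤ q n) → (∑' n, q n = 1) →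
      ENNReal.ofReal (∑' n : ℕ, q n * ((n : ℝ) - 1 + t) ^ α) * ENNReal.ofReal (Real.Gamma (-α))
        = ∫⁻ x in Set.Ioi (0:ℝ), ENNReal.ofReal
            ((x ^ (-α - 1) * Real.exp (-((t - 1) * x))) *
              ∑' m : ℕ, q m * (Real.exp (-x)) ^ m) := by
    intro q hq0 hqnn hqsum
    have hmeas : ∀ n : ℕ, AEMeasurable
        (fun x : ℝ => ENNReal.ofReal (q n * (x ^ (-α - 1) * Real.exp (-(((n : ℝ) - 1 + t) * x)))))
        (MeasureTheory.volume.restrict (Set.Ioi 0)) := by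
      intro n
      apply Measurable.aemeasurable
      apply Measurable.ennreal_ofReal
      fun_prop
    rw [ENNReal.ofReal_tsum_of_nonneg (moment_term_nonneg hq0 hqnn ht)
      (summable_moment hq0 hqnn hqsum hα ht), ← ENNReal.tsum_mul_right]
    rw [tsum_congr (fun n => moment_repr hq0 hqnn hα ht n)]
    rw [← MeasureTheory.lintegral_tsum hmeas]
    refine MeasureTheory.lintegral_congr_ae ?_
    refine Filter.eventually_of_mem
      (MeasureTheory.self_mem_ae_restrict measurableSet_Ioi) (fun x hx => ?_)
    have hx0 : (0:ℝ) < x := hx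
    have hz0 : (0:ℝ) < Real.exp (-x) := Real.exp_pos _
    have hz1 : Real.exp (-x) ≤ 1 := by
      rw [Real.exp_le_one_iff]; linarith
    have hCnn : 0 ≤ x ^ (-α - 1) * Real.exp (-((t - 1) * x)) :=
      mul_nonneg (Real.rpow_nonneg hx0.le _) (Real.exp_nonneg _)
    have hterm : ∀ n : ℕ, q n * (x ^ (-α - 1) * Real.exp (-(((n : ℝ) - 1 + t) * x)))
        = (x ^ (-α - 1) * Real.exp (-((t - 1) * x))) * (q n * (Real.exp (-x)) ^ n) := by
      intro n
      rw [show -((((n : ℝ) - 1 + t)) * x) = -((t - 1) * x) + (n : ℝ) * (-x) by ring,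
        Real.exp_add, Real.exp_nat_mul]
      ring
    calc ∑' n : ℕ, ENNReal.ofReal (q n * (x ^ (-α-1) * Real.exp (-(((n:ℝ)-1+t) * x))))
        = ∑' n : ℕ, ENNReal.ofReal (x ^ (-α-1) * Real.exp (-((t-1)*x)))
            * ENNReal.ofReal (q n * (Real.exp (-x)) ^ n) := by
          refine tsum_congr fun n => ?_
          rw [hterm n, ENNReal.ofReal_mul hCnn]
      _ = ENNReal.ofReal (x ^ (-α-1) * Real.exp (-((t-1)*x)))
            * ∑' n : ℕ, ENNReal.ofReal (q n * (Real.exp (-x)) ^ n) := ENNReal.tsum_mul_left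
      _ = ENNReal.ofReal (x ^ (-α-1) * Real.exp (-((t-1)*x)))
            * ENNReal.ofReal (∑' n : ℕ, q n * (Real.exp (-x)) ^ n) := by
          rw [← ENNReal.ofReal_tsum_of_nonneg
            (fun n => mul_nonneg (hqnn n) (pow_nonneg hz0.le n))
            (summable_pow hqnn hqsum hz0.le hz1)]
      _ = ENNReal.ofReal ((x ^ (-α-1) * Real.exp (-((t-1)*x)))
            * ∑' n : ℕ, q n * (Real.exp (-x)) ^ n) := (ENNReal.ofReal_mul hCnn).symm
  -- compare the two integrals
  have hmono : (∫⁻ x in Set.Ioi (0:ℝ), ENNReal.ofReal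
        ((x ^ (-α - 1) * Real.exp (-((t - 1) * x))) * ∑' m : ℕ, q₁ m * (Real.exp (-x)) ^ m))
      ≤ ∫⁻ x in Set.Ioi (0:ℝ), ENNReal.ofReal
        ((x ^ (-α - 1) * Real.exp (-((t - 1) * x))) * ∑' m : ℕ, q₂ m * (Real.exp (-x)) ^ m) := by
    refine MeasureTheory.lintegral_mono_ae ?_
    refine Filter.eventually_of_mem
      (MeasureTheory.self_mem_ae_restrict measurableSet_Ioi) (fun x hx => ?_)
    have hx0 : (0:ℝ) < x := hx
    have hz : Real.exp (-x) ∈ Set.Ioo (0:ℝ) 1 := by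
      constructor
      · exact Real.exp_pos _
      · rw [Real.exp_lt_one_iff]; linarith
    refine ENNReal.ofReal_le_ofReal ?_
    refine mul_le_mul_of_nonneg_left (hY _ hz)
      (mul_nonneg (Real.rpow_nonneg hx0.le _) (Real.exp_nonneg _))
  rw [← chain q₁ hq₁0 hq₁nn hq₁sum, ← chain q₂ hq₂0 hq₂nn hq₂sum] at hmono
  have hcancel := (ENNReal.mul_le_mul_iff_left
    (by simp [hΓpos] : ENNReal.ofReal (Real.Gamma (-α)) ≠ 0) ENNReal.ofReal_ne_top).1 hmono
  exact (ENNReal.ofReal_le_ofReal_iff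
    (tsum_nonneg (moment_term_nonneg hq₂0 hq₂nn ht))).1 hcancel

/-- Theorem 6.4 of the paper. For two critical offspring distributions
(each with `p 1 < 1`), the negative-integer-moment inequalities
`∑ q₁ₙ (n−1+t)^{−m} ≤ ∑ q₂ₙ (n−1+t)^{−m}` (all `m ≥ 1`, `t > 0`) hold iff `Φ₁ ≤ Φ₂`
on `(0,1)`; and in that case the inequality also holds for all real exponents `α < 0`. -/
theorem stmt8
    (p₁ p₂ : ℕ → ℝ) (hp₁ : ∀ k, 0 ≤ p₁ k) (hp₂ : ∀ k, 0 ≤ p₂ k)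
    (hpsum₁ : ∑' k, p₁ k = 1) (hpsum₂ : ∑' k, p₂ k = 1)
    (hcrit₁ : ∑' k : ℕ, (k : ℝ) * p₁ k = 1) (hcrit₂ : ∑' k : ℕ, (k : ℝ) * p₂ k = 1)
    (hp₁1 : p₁ 1 < 1) (hp₂1 : p₂ 1 < 1)
    (q₁ q₂ : ℕ → ℝ)
    (hq₁0 : q₁ 0 = 0) (hq₂0 : q₂ 0 = 0)
    (hq₁nn : ∀ n, 0 ≤ q₁ n) (hq₂nn : ∀ n, 0 ≤ q₂ n)
    (hq₁sum : ∑' n, q₁ n = 1) (hq₂sum : ∑' n, q₂ n = 1)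
    (hfix₁ : ∀ z ∈ Set.Icc (0:ℝ) 1,
      (∑' n, q₁ n * z ^ n) = z * ∑' k, p₁ k * (∑' n, q₁ n * z ^ n) ^ k)
    (hfix₂ : ∀ z ∈ Set.Icc (0:ℝ) 1,
      (∑' n, q₂ n * z ^ n) = z * ∑' k, p₂ k * (∑' n, q₂ n * z ^ n) ^ k) :
    ((∀ m : ℕ, 1 ≤ m → ∀ t : ℝ, 0 < t →
        (∑' n : ℕ, q₁ n * ((n : ℝ) - 1 + t) ^ (-(m : ℝ))) ≤
          ∑' n : ℕ, q₂ n * ((n : ℝ) - 1 + t) ^ (-(m : ℝ))) ↔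
      (∀ s ∈ Set.Ioo (0:ℝ) 1, (∑' k, p₁ k * s ^ k) ≤ ∑' k, p₂ k * s ^ k)) ∧
    ((∀ s ∈ Set.Ioo (0:ℝ) 1, (∑' k, p₁ k * s ^ k) ≤ ∑' k, p₂ k * s ^ k) →
      ∀ α : ℝ, α < 0 → ∀ t : ℝ, 0 < t →
        (∑' n : ℕ, q₁ n * ((n : ℝ) - 1 + t) ^ α) ≤
          ∑' n : ℕ, q₂ n * ((n : ℝ) - 1 + t) ^ α) := by
  have hmoreover : (∀ s ∈ Set.Ioo (0:ℝ) 1, (∑' k, p₁ k * s ^ k) ≤ ∑' k, p₂ k * s ^ k) →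
      ∀ α : ℝ, α < 0 → ∀ t : ℝ, 0 < t →
        (∑' n : ℕ, q₁ n * ((n : ℝ) - 1 + t) ^ α) ≤
          ∑' n : ℕ, q₂ n * ((n : ℝ) - 1 + t) ^ α := by
    intro hPhi α hα t ht
    have hY : ∀ z ∈ Set.Ioo (0:ℝ) 1, (∑' n, q₁ n * z ^ n) ≤ ∑' n, q₂ n * z ^ n := by
      intro z hz
      exact Y_mono hp₂ hpsum₂ hcrit₂ hp₂1 hq₁0 hq₂0 hq₁nn hq₂nn hq₁sum hq₂sum hPhi hz
        (hfix₁ z ⟨hz.1.le, hz.2.le⟩) (hfix₂ z ⟨hz.1.le, hz.2.le⟩)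
    exact moment_le_of_Y_le hq₁0 hq₂0 hq₁nn hq₂nn hq₁sum hq₂sum hY hα ht
  refine ⟨⟨fun hmom => ?_, fun hPhi m hm t ht => ?_⟩, hmoreover⟩
  · have hY := fun (z : ℝ) (hz : z ∈ Set.Ioo (0:ℝ) 1) =>
      Y_le_of_moments hq₁0 hq₂0 hq₁nn hq₂nn hq₁sum hq₂sum hmom hz
    exact phi_le_of_Y_le hp₁ hpsum₁ hcrit₁ hp₁1 hp₂ hpsum₂ hcrit₂ hp₂1 hq₁0 hq₂0
      hq₁nn hq₂nn hq₁sum hq₂sum hfix₁ hfix₂ hY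
  · have hmR : (0:ℝ) < (m : ℝ) := by exact_mod_cast hm
    exact hmoreover hPhi (-(m:ℝ)) (by linarith) t ht
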